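/- There exist constants C > 0 and d₀ > 0 such that for every d ≥ d₀, the quantity Q(ρ_d) = ∬_{|x−y|>1} ρ_d(x) ρ_d(y) dx dy satisfies |Q(ρ_d) − π²/(3d²)| ≤ C/d³. -/

import Mathlib

open MeasureTheory

noncomputable section

/-- The logistic-profile density `ρ_d`. -/
def rho (d : ℝ) (x : ℝ) : ℝ :=
  (1 - Real.exp (-d)) / ((1 + Real.exp (-d * x)) * (1 + Real.exp (d * (x - 1))))

namespace Stmt8

open Real Set Filter

/-- CDF of `rho d`. -/
def F (d a : ℝ) : ℝ :=
  (Real.log (1 + Real.exp (d * a)) - Real.log (1 + Real.exp (d * (a - 1)))) / d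

lemma rho_nonneg {d : ℝ} (hd : 0 ≤ d) (x : ℝ) : 0 ≤ rho d x := by
  unfold rho
  have h1 : Real.exp (-d) ≤ 1 := by
    rw [Real.exp_le_one_iff]; linarith
  apply div_nonneg (by linarith)
  positivity

lemma rho_cont (d : ℝ) : Continuous (rho d) := by
  unfold rho
  fun_prop (disch := intros; positivity)

lemma integrable_exp_neg_abs_mul {b : ℝ} (hb : 0 < b) :
    Integrable (fun s : ℝ => Real.exp (-(b * |s|))) := by
  have hIoi : IntegrableOn (fun s : ℝ => Real.exp (-(b * s))) (Ioi 0) := by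
    have h := exp_neg_integrableOn_Ioi 0 hb
    simpa [neg_mul] using h
  have hIci : IntegrableOn (fun s : ℝ => Real.exp (-(b * s))) (Ici 0) :=
    Iff.mpr integrableOn_Ici_iff_integrableOn_Ioi hIoi
  have hIci' : IntegrableOn (fun s : ℝ => Real.exp (-(b * |s|))) (Ici 0) :=
    hIci.congr_fun (fun x hx => by rw [abs_of_nonneg hx]) measurableSet_Ici
  have hIic : IntegrableOn (fun s : ℝ => Real.exp (-(b * |s|))) (Iic 0) := by
    have h2 : Integrable ((Ici (0:ℝ)).indicator (fun s : ℝ => Real.exp (-(b * |s|)))) :=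
      (integrable_indicator_iff measurableSet_Ici).mpr hIci'
    have h3 := h2.comp_neg
    rw [← integrable_indicator_iff measurableSet_Iic]
    convert h3 using 1
    · rfl
    funext x
    simp [Set.indicator, abs_neg, neg_nonneg, Set.mem_Ici, Set.mem_Iic]
  have hIoi' : IntegrableOn (fun s : ℝ => Real.exp (-(b * |s|))) (Ioi 0) :=
    hIoi.congr_fun (fun x hx => by rw [abs_of_nonneg (le_of_lt hx)]) measurableSet_Ioi
  rw [← integrableOn_univ, ← Iic_union_Ioi (a := (0:ℝ))]
  exact hIic.union hIoi'

lemma rho_le {d : ℝ} (hd : 1 ≤ d) (x : ℝ) :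
    rho d x ≤ Real.exp d * Real.exp (-(1 * |x|)) := by
  have hd0 : (0:ℝ) < d := lt_of_lt_of_le one_pos hd
  have hnum : (1:ℝ) - Real.exp (-d) ≤ 1 := by linarith [Real.exp_pos (-d)]
  rcases le_total x 0 with hx | hx
  · have h2 : rho d x ≤ Real.exp (d * x) := by
      unfold rho
      calc (1 - Real.exp (-d)) / ((1 + Real.exp (-d * x)) * (1 + Real.exp (d * (x - 1))))
          ≤ 1 / Real.exp (-d * x) := by
            apply div_le_div₀ (by norm_num) hnum (Real.exp_pos _)
            nlinarith [Real.exp_pos (-d * x), Real.exp_pos (d * (x - 1))]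
        _ = Real.exp (d * x) := by rw [one_div, ← Real.exp_neg]; ring_nf
    calc rho d x ≤ Real.exp (d * x) := h2
      _ ≤ Real.exp x := by
          apply Real.exp_le_exp.mpr; nlinarith
      _ = 1 * Real.exp (-(1 * |x|)) := by rw [abs_of_nonpos hx]; ring_nf
      _ ≤ Real.exp d * Real.exp (-(1 * |x|)) := by
          apply mul_le_mul_of_nonneg_right _ (le_of_lt (Real.exp_pos _))
          exact Real.one_le_exp (by linarith)
  · have h2 : rho d x ≤ Real.exp (-(d * (x - 1))) := by
      unfold rho
      calc (1 - Real.exp (-d)) / ((1 + Real.exp (-d * x)) * (1 + Real.exp (d * (x - 1))))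
          ≤ 1 / Real.exp (d * (x - 1)) := by
            apply div_le_div₀ (by norm_num) hnum (Real.exp_pos _)
            nlinarith [Real.exp_pos (-d * x), Real.exp_pos (d * (x - 1))]
        _ = Real.exp (-(d * (x - 1))) := by rw [one_div, ← Real.exp_neg]
    calc rho d x ≤ Real.exp (-(d * (x - 1))) := h2
      _ ≤ Real.exp (d - x) := by apply Real.exp_le_exp.mpr; nlinarith
      _ = Real.exp d * Real.exp (-(1 * |x|)) := by
          rw [← Real.exp_add, abs_of_nonneg hx]; ring_nf

lemma rho_integrable {d : ℝ} (hd : 1 ≤ d) : Integrable (rho d) := by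
  apply Integrable.mono' ((integrable_exp_neg_abs_mul one_pos).const_mul (Real.exp d))
    (rho_cont d).aestronglyMeasurable
  filter_upwards with x
  rw [Real.norm_eq_abs, abs_of_nonneg (rho_nonneg (by linarith) x)]
  exact rho_le hd x

lemma hasDerivAt_F {d : ℝ} (hd : 0 < d) (x : ℝ) : HasDerivAt (F d) (rho d x) x := by
  have hmk : ∀ k : ℝ, HasDerivAt (fun a : ℝ => Real.log (1 + Real.exp (d * (a - k))))
      (d * Real.exp (d * (x - k)) / (1 + Real.exp (d * (x - k)))) x := by
    intro k
    have h0 : HasDerivAt (fun a : ℝ => d * (a - k)) d x := by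
      simpa using ((hasDerivAt_id x).sub_const k).const_mul d
    have h2 : HasDerivAt (fun a : ℝ => Real.exp (d * (a - k))) (Real.exp (d * (x - k)) * d) x :=
      by have := (Real.hasDerivAt_exp (d * (x - k))).comp x h0; exact this
    have h3 : HasDerivAt (fun a : ℝ => 1 + Real.exp (d * (a - k)))
        (Real.exp (d * (x - k)) * d) x := h2.const_add 1
    have h4 := h3.log (by positivity)
    convert h4 using 1; ring
  have h5 : HasDerivAt (fun a : ℝ => Real.log (1 + Real.exp (d * a)))
      (d * Real.exp (d * x) / (1 + Real.exp (d * x))) x := by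
    have := hmk 0
    simpa using this
  have h6 := ((h5.sub (hmk 1)).div_const d)
  refine h6.congr_deriv ?_
  unfold rho
  have hq : Real.exp (d * (x - 1)) = Real.exp (d * x) * Real.exp (-d) := by
    rw [← Real.exp_add]; ring_nf
  have hp : Real.exp (-d * x) = (Real.exp (d * x))⁻¹ := by
    rw [← Real.exp_neg]; ring_nf
  rw [hq, hp]
  have e1 : (0:ℝ) < Real.exp (d * x) := Real.exp_pos _
  have e2 : (0:ℝ) < 1 + Real.exp (d * x) := by positivity
  have e3 : (0:ℝ) < 1 + Real.exp (d * x) * Real.exp (-d) := by positivity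
  field_simp
  ring

lemma F_tendsto {d : ℝ} (hd : 0 < d) : Tendsto (F d) atBot (nhds 0) := by
  have hlog : Tendsto (fun y : ℝ => Real.log (1 + y)) (nhds 0) (nhds 0) := by
    have h := (Real.continuousAt_log (by norm_num : (1:ℝ) + 0 ≠ 0)).comp
      ((continuousAt_const.add continuousAt_id) : ContinuousAt (fun y : ℝ => 1 + y) 0)
    simpa [Function.comp_def] using h.tendsto
  have h1 : Tendsto (fun a : ℝ => d * a) atBot atBot := by
    exact Tendsto.const_mul_atBot hd tendsto_id
  have h2 : Tendsto (fun a : ℝ => d * (a - 1)) atBot atBot := by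
    apply Tendsto.const_mul_atBot hd
    exact tendsto_atBot_add_const_right _ (-1) tendsto_id
  have h3 := (hlog.comp (Real.tendsto_exp_atBot.comp h1)).sub
    (hlog.comp (Real.tendsto_exp_atBot.comp h2))
  have h4 := h3.div_const d
  delta F; simpa [Function.comp_def] using h4

lemma integral_Iio_rho {d : ℝ} (hd : 1 ≤ d) (a : ℝ) : ∫ y in Iio a, rho d y = F d a := by
  have hd0 : (0:ℝ) < d := lt_of_lt_of_le one_pos hd
  have hderiv : ∀ x ∈ Ici (-a), HasDerivAt (fun x => -F d (-x)) (rho d (-x)) x := by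
    intro x _
    have h1 := (hasDerivAt_F hd0 (-x)).comp x (hasDerivAt_neg x)
    have h2 := h1.neg
    refine h2.congr_deriv ?_; ring
  have hint : IntegrableOn (fun x => rho d (-x)) (Ioi (-a)) :=
    ((rho_integrable hd).comp_neg).integrableOn
  have htend : Tendsto (fun x => -F d (-x)) atTop (nhds 0) := by
    have := ((F_tendsto hd0).comp tendsto_neg_atTop_atBot).neg
    simpa using this
  have key := integral_Ioi_of_hasDerivAt_of_tendsto' hderiv hint htend
  have swap : (∫ x in Ioi (-a), rho d (-x)) = ∫ x in Iic a, rho d x := by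
    simpa using integral_comp_neg_Ioi (-a) (rho d)
  rw [swap] at key
  rw [← integral_Iic_eq_integral_Iio, key]
  simp

/-- rescaled integrand -/
def G (c s : ℝ) : ℝ :=
  (1 - c) * (Real.log (1 + Real.exp s) - Real.log (1 + c * Real.exp s)) /
    ((1 + c * Real.exp (-s)) * (1 + Real.exp s))

def g0 (s : ℝ) : ℝ := Real.log (1 + Real.exp s) / (1 + Real.exp s)

lemma log_one_add_le_two_sqrt {t : ℝ} (ht : 0 ≤ t) : Real.log (1 + t) ≤ 2 * Real.sqrt t := by
  have h1 : (0:ℝ) < Real.sqrt (1 + t) := Real.sqrt_pos.mpr (by linarith)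
  have h2 : Real.log (1 + t) = 2 * Real.log (Real.sqrt (1 + t)) := by
    rw [Real.log_sqrt (by linarith)]; ring
  have h3 : Real.log (Real.sqrt (1 + t)) ≤ Real.sqrt (1 + t) - 1 :=
    Real.log_le_sub_one_of_pos h1
  have h4 : Real.sqrt (1 + t) ≤ 1 + Real.sqrt t := by
    have h5 : (1:ℝ) + t ≤ (1 + Real.sqrt t) ^ 2 := by
      nlinarith [Real.sq_sqrt ht, Real.sqrt_nonneg t]
    calc Real.sqrt (1 + t) ≤ Real.sqrt ((1 + Real.sqrt t) ^ 2) := Real.sqrt_le_sqrt h5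
      _ = 1 + Real.sqrt t := Real.sqrt_sq (by positivity)
  linarith

lemma div_one_add_le_sqrt {t : ℝ} (ht : 0 ≤ t) : t / (1 + t) ≤ Real.sqrt t := by
  rw [div_le_iff₀ (by linarith)]
  nlinarith [Real.sq_sqrt ht, Real.sqrt_nonneg t, mul_nonneg (Real.sqrt_nonneg t)
    (sq_nonneg (Real.sqrt t - 1))]

lemma g0_nonneg (s : ℝ) : 0 ≤ g0 s := by
  unfold g0
  apply div_nonneg (Real.log_nonneg (by linarith [Real.exp_pos s]))
  linarith [Real.exp_pos s]

lemma G_nonneg {c : ℝ} (hc : 0 ≤ c) (hc1 : c ≤ 1) (s : ℝ) : 0 ≤ G c s := by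
  unfold G
  have hE := Real.exp_pos s
  have hE' := Real.exp_pos (-s)
  apply div_nonneg _ (by positivity)
  apply mul_nonneg (by linarith)
  rw [sub_nonneg]
  apply Real.log_le_log (by positivity)
  nlinarith

lemma G_le_g0 {c : ℝ} (hc : 0 ≤ c) (hc1 : c ≤ 1) (s : ℝ) : G c s ≤ g0 s := by
  unfold G g0
  have hE := Real.exp_pos s
  have hE' := Real.exp_pos (-s)
  have hL1 : 0 ≤ Real.log (1 + Real.exp s) := Real.log_nonneg (by linarith)
  have hL2 : 0 ≤ Real.log (1 + c * Real.exp s) := Real.log_nonneg (by nlinarith)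
  have hL12 : Real.log (1 + c * Real.exp s) ≤ Real.log (1 + Real.exp s) :=
    Real.log_le_log (by nlinarith) (by nlinarith)
  apply div_le_div₀ hL1 _ (by linarith)
  · nlinarith [mul_nonneg hc hE'.le]
  · nlinarith

lemma g0_le (s : ℝ) : g0 s ≤ 2 * Real.exp (-|s| / 2) := by
  unfold g0
  have hE := Real.exp_pos s
  rcases le_total s 0 with hs | hs
  · rw [abs_of_nonpos hs]
    have h1 : Real.log (1 + Real.exp s) ≤ Real.exp s := by
      have := Real.log_le_sub_one_of_pos (show (0:ℝ) < 1 + Real.exp s by linarith)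
      linarith
    calc Real.log (1 + Real.exp s) / (1 + Real.exp s) ≤ Real.log (1 + Real.exp s) := by
          apply div_le_self (Real.log_nonneg (by linarith)) (by linarith)
      _ ≤ Real.exp s := h1
      _ ≤ Real.exp (- -s / 2) := by
          apply Real.exp_le_exp.mpr; linarith
      _ ≤ 2 * Real.exp (- -s / 2) := by linarith [Real.exp_pos (- -s / 2)]
  · rw [abs_of_nonneg hs]
    have h1 : Real.log (1 + Real.exp s) ≤ s + 1 := by
      have h2 : (1:ℝ) + Real.exp s ≤ 2 * Real.exp s := by nlinarith [Real.one_le_exp hs]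
      have h3 := Real.log_le_log (by linarith) h2
      rw [Real.log_mul (by norm_num) (Real.exp_ne_zero s), Real.log_exp] at h3
      have h4 : Real.log 2 ≤ 1 := by
        have := Real.log_le_sub_one_of_pos (show (0:ℝ) < 2 by norm_num); linarith
      linarith
    have h5 : s + 1 ≤ 2 * Real.exp (s / 2) := by
      have := Real.add_one_le_exp (s / 2); linarith
    have e6 : Real.exp (-s / 2) * Real.exp s = Real.exp (s / 2) := by
      rw [← Real.exp_add]; congr 1; ring
    calc Real.log (1 + Real.exp s) / (1 + Real.exp s) ≤ (s + 1) / (1 + Real.exp s) := by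
          gcongr
      _ ≤ 2 * Real.exp (-s / 2) := by
          rw [div_le_iff₀ (by linarith)]
          nlinarith [Real.exp_pos (-s / 2), Real.exp_pos (s / 2)]

set_option maxHeartbeats 1600000 in
lemma g0_sub_G_le {c : ℝ} (hc : 0 ≤ c) (hc1 : c ≤ 1) (s : ℝ) :
    g0 s - G c s ≤ 6 * Real.sqrt c * Real.exp (-|s| / 2) := by
  have hE := Real.exp_pos s
  have hE' := Real.exp_pos (-s)
  have hEE' : Real.exp s * Real.exp (-s) = 1 := by rw [← Real.exp_add]; simp
  have hD1 : (0:ℝ) < 1 + c * Real.exp (-s) := by positivity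
  have hD2 : (0:ℝ) < 1 + Real.exp s := by linarith
  have hL1 : 0 ≤ Real.log (1 + Real.exp s) := Real.log_nonneg (by linarith)
  have hL2 : 0 ≤ Real.log (1 + c * Real.exp s) := Real.log_nonneg (by nlinarith)
  set r := Real.sqrt c with hr
  have hr0 : 0 ≤ r := Real.sqrt_nonneg c
  have hr2 : r ^ 2 = c := Real.sq_sqrt hc
  have hr1 : r ≤ 1 := by
    rw [hr, show (1:ℝ) = Real.sqrt 1 by rw [Real.sqrt_one]]
    exact Real.sqrt_le_sqrt hc1
  have hcr : c ≤ r := by nlinarith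
  -- identity
  have hid : g0 s - G c s =
      g0 s * ((c + c * Real.exp (-s)) / (1 + c * Real.exp (-s))) +
      (1 - c) * Real.log (1 + c * Real.exp s) /
        ((1 + c * Real.exp (-s)) * (1 + Real.exp s)) := by
    unfold g0 G
    field_simp
    ring
  -- bound on the fraction
  have hQ0 : 0 ≤ Real.sqrt (c * Real.exp (-s)) := Real.sqrt_nonneg _
  have hQ2 : Real.sqrt (c * Real.exp (-s)) ^ 2 = c * Real.exp (-s) :=
    Real.sq_sqrt (by positivity)
  have hQeq : Real.sqrt (c * Real.exp (-s)) = r * Real.exp (-s / 2) := by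
    rw [show Real.exp (-s / 2) = Real.sqrt (Real.exp (-s)) from by rw [← Real.exp_half]]
    rw [hr, ← Real.sqrt_mul hc]
  have hfrac : (c + c * Real.exp (-s)) / (1 + c * Real.exp (-s)) ≤ c + r * Real.exp (-s / 2) := by
    rw [div_le_iff₀ hD1, ← hQeq]
    nlinarith [mul_nonneg hQ0 (sq_nonneg (Real.sqrt (c * Real.exp (-s)) - 1)),
      mul_nonneg hc (mul_nonneg hc hE'.le), mul_nonneg hc hE'.le]
  have hA : g0 s * ((c + c * Real.exp (-s)) / (1 + c * Real.exp (-s))) ≤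
      4 * r * Real.exp (-|s| / 2) := by
    have hg0 : 0 ≤ g0 s := g0_nonneg s
    have hfr0 : 0 ≤ (c + c * Real.exp (-s)) / (1 + c * Real.exp (-s)) := by positivity
    rcases le_total s 0 with hs | hs
    · have hg0' : g0 s ≤ Real.exp s := by
        unfold g0
        calc Real.log (1 + Real.exp s) / (1 + Real.exp s) ≤ Real.log (1 + Real.exp s) :=
              div_le_self hL1 (by linarith)
          _ ≤ Real.exp s := by
              have := Real.log_le_sub_one_of_pos hD2; linarith
      rw [abs_of_nonpos hs]
      calc g0 s * ((c + c * Real.exp (-s)) / (1 + c * Real.exp (-s)))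
          ≤ Real.exp s * (c + r * Real.exp (-s / 2)) := by
            apply mul_le_mul hg0' hfrac hfr0 hE.le
        _ ≤ 2 * r * Real.exp (- -s / 2) := by
            have e1 : Real.exp s * Real.exp (-s / 2) = Real.exp (s / 2) := by
              rw [← Real.exp_add]; ring_nf
            have e2 : Real.exp (s / 2) = Real.exp (- -s / 2) := by congr 1; ring
            have e3 : Real.exp s ≤ Real.exp (s / 2) := Real.exp_le_exp.mpr (by linarith)
            have e4 : Real.exp (s / 2) ≤ 1 := Real.exp_le_one_iff.mpr (by linarith)
            have hsq2 : Real.exp (s / 2) ^ 2 = Real.exp s := by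
              rw [← Real.exp_nat_mul]; congr 1; push_cast; ring
            have p1 : 0 ≤ r * Real.exp (s / 2) := by positivity
            have p2 : r * Real.exp (s / 2) ≤ 1 := by
              nlinarith [Real.exp_pos (s / 2)]
            have e5 : c * Real.exp s ≤ r * Real.exp (s / 2) := by
              have hce : c * Real.exp s = (r * Real.exp (s / 2)) ^ 2 := by
                rw [← hr2, ← hsq2]; ring
              nlinarith
            calc Real.exp s * (c + r * Real.exp (-s / 2))
                = c * Real.exp s + r * (Real.exp s * Real.exp (-s / 2)) := by ring
              _ ≤ r * Real.exp (s / 2) + r * Real.exp (s / 2) := by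
                  rw [e1]; linarith
              _ = 2 * r * Real.exp (- -s / 2) := by rw [← e2]; ring
        _ ≤ 4 * r * Real.exp (- -s / 2) := by nlinarith [Real.exp_pos (- -s / 2)]
    · rw [abs_of_nonneg hs]
      have hg0'' : g0 s ≤ 2 * Real.exp (-s / 2) := by
        have := g0_le s; rwa [abs_of_nonneg hs] at this
      calc g0 s * ((c + c * Real.exp (-s)) / (1 + c * Real.exp (-s)))
          ≤ (2 * Real.exp (-s / 2)) * (c + r * Real.exp (-s / 2)) := by
            apply mul_le_mul hg0'' hfrac hfr0 (by positivity)
        _ ≤ 4 * r * Real.exp (-s / 2) := by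
            have e4 : Real.exp (-s / 2) ≤ 1 := Real.exp_le_one_iff.mpr (by linarith)
            nlinarith [Real.exp_pos (-s / 2), mul_nonneg hr0 (Real.exp_pos (-s/2)).le]
  have hB : (1 - c) * Real.log (1 + c * Real.exp s) /
      ((1 + c * Real.exp (-s)) * (1 + Real.exp s)) ≤ 2 * r * Real.exp (-|s| / 2) := by
    have hlog : Real.log (1 + c * Real.exp s) ≤ 2 * (r * Real.exp (s / 2)) := by
      have h1 := log_one_add_le_two_sqrt (show (0:ℝ) ≤ c * Real.exp s by positivity)
      have h2 : Real.sqrt (c * Real.exp s) = r * Real.exp (s / 2) := by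
        rw [show Real.exp (s / 2) = Real.sqrt (Real.exp s) from by rw [← Real.exp_half]]
        rw [hr, ← Real.sqrt_mul hc]
      rw [h2] at h1; exact h1
    have hnum : (1 - c) * Real.log (1 + c * Real.exp s) ≤ 2 * r * Real.exp (s / 2) := by
      nlinarith
    rcases le_total s 0 with hs | hs
    · rw [abs_of_nonpos hs]
      calc (1 - c) * Real.log (1 + c * Real.exp s) /
          ((1 + c * Real.exp (-s)) * (1 + Real.exp s))
          ≤ (1 - c) * Real.log (1 + c * Real.exp s) := by
            apply div_le_self (mul_nonneg (by linarith) hL2)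
            nlinarith [mul_nonneg hc hE'.le]
        _ ≤ 2 * r * Real.exp (- -s / 2) := by
            have e7 : Real.exp (s / 2) = Real.exp (- -s / 2) := by congr 1; ring
            calc (1 - c) * Real.log (1 + c * Real.exp s) ≤ 2 * r * Real.exp (s / 2) := hnum
              _ = 2 * r * Real.exp (- -s / 2) := by rw [e7]
    · rw [abs_of_nonneg hs]
      calc (1 - c) * Real.log (1 + c * Real.exp s) /
          ((1 + c * Real.exp (-s)) * (1 + Real.exp s))
          ≤ (2 * r * Real.exp (s / 2)) / Real.exp s := by
            apply div_le_div₀ (by positivity) hnum (Real.exp_pos s)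
            nlinarith [mul_nonneg (mul_nonneg hc hE'.le) hE.le, mul_nonneg hc hE'.le]
        _ = 2 * r * Real.exp (-s / 2) := by
            rw [div_eq_iff (Real.exp_ne_zero s)]
            have e8 : Real.exp (-s / 2) * Real.exp s = Real.exp (s / 2) := by
              rw [← Real.exp_add]; congr 1; ring
            linear_combination (-2 * r) * e8
  have habs : Real.exp (-|s| / 2) = Real.exp (-|s| / 2) := rfl
  calc g0 s - G c s = g0 s * ((c + c * Real.exp (-s)) / (1 + c * Real.exp (-s))) +
      (1 - c) * Real.log (1 + c * Real.exp s) /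
        ((1 + c * Real.exp (-s)) * (1 + Real.exp s)) := hid
    _ ≤ 4 * r * Real.exp (-|s| / 2) + 2 * r * Real.exp (-|s| / 2) := add_le_add hA hB
    _ = 6 * r * Real.exp (-|s| / 2) := by ring

lemma mexp_integrable : Integrable (fun s : ℝ => Real.exp (-|s| / 2)) := by
  have h : (fun s : ℝ => Real.exp (-|s| / 2)) = fun s : ℝ => Real.exp (-(1/2 * |s|)) := by
    funext s; congr 1; ring
  rw [h]
  exact integrable_exp_neg_abs_mul (by norm_num)

lemma g0_cont : Continuous g0 := by
  apply Continuous.div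
  · apply Continuous.log (by fun_prop)
    intro x; positivity
  · fun_prop
  · intro x; positivity

lemma G_cont {c : ℝ} (hc : 0 ≤ c) : Continuous (G c) := by
  apply Continuous.div
  · apply Continuous.mul continuous_const
    apply Continuous.sub
    · apply Continuous.log (by fun_prop)
      intro x; positivity
    · apply Continuous.log (by fun_prop)
      intro x; positivity
  · fun_prop
  · intro x; positivity

lemma integral_Ioi_exp_half : ∫ x in Ioi (0:ℝ), Real.exp (-x / 2) = 2 := by
  have hderiv : ∀ x ∈ Ici (0:ℝ), HasDerivAt (fun x => -2 * Real.exp (-x / 2))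
      (Real.exp (-x / 2)) x := by
    intro x _
    have h0 : HasDerivAt (fun x : ℝ => -x / 2) (-(1/2)) x := by
      have := (hasDerivAt_id x).neg.div_const 2
      refine this.congr_deriv ?_
      norm_num
    have h1 := (Real.hasDerivAt_exp (-x / 2)).comp x h0
    have h2 := h1.const_mul (-2)
    refine h2.congr_deriv ?_
    ring
  have hint : IntegrableOn (fun x : ℝ => Real.exp (-x / 2)) (Ioi 0) := by
    have h := exp_neg_integrableOn_Ioi (0:ℝ) (show (0:ℝ) < 1/2 by norm_num)
    have h2 : (fun x : ℝ => Real.exp (-(1/2) * x)) = fun x : ℝ => Real.exp (-x / 2) := by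
      funext x; congr 1; ring
    rwa [h2] at h
  have htend : Tendsto (fun x : ℝ => -2 * Real.exp (-x / 2)) atTop (nhds 0) := by
    have h1 : Tendsto (fun x : ℝ => -x / 2) atTop atBot := by
      apply Tendsto.atBot_div_const (by norm_num)
      exact tendsto_neg_atTop_atBot
    have h2 := (Real.tendsto_exp_atBot.comp h1).const_mul (-2)
    simpa using h2
  have key := integral_Ioi_of_hasDerivAt_of_tendsto' hderiv hint htend
  rw [key]; norm_num

lemma mexp_integral : ∫ s : ℝ, Real.exp (-|s| / 2) = 4 := by
  have h := integral_comp_abs (f := fun t => Real.exp (-t / 2))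
  rw [h, integral_Ioi_exp_half]; norm_num

lemma g0_integrable : Integrable g0 := by
  apply Integrable.mono' (mexp_integrable.const_mul 2) g0_cont.aestronglyMeasurable
  filter_upwards with s
  rw [Real.norm_eq_abs, abs_of_nonneg (g0_nonneg s)]
  exact g0_le s

lemma G_integrable {c : ℝ} (hc : 0 ≤ c) (hc1 : c ≤ 1) : Integrable (G c) := by
  apply Integrable.mono' (mexp_integrable.const_mul 2) (G_cont hc).aestronglyMeasurable
  filter_upwards with s
  rw [Real.norm_eq_abs, abs_of_nonneg (G_nonneg hc hc1 s)]
  exact le_trans (G_le_g0 hc hc1 s) (g0_le s)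

lemma hasSum_inv_sq_succ : HasSum (fun n : ℕ => 1 / ((n:ℝ) + 1) ^ 2) (Real.pi ^ 2 / 6) := by
  have hz := hasSum_zeta_two
  have h1 : HasSum (fun n : ℕ => 1 / ((↑(n + 1) : ℝ)) ^ 2) (Real.pi ^ 2 / 6) := by
    apply (hasSum_nat_add_iff (f := fun n : ℕ => 1 / (n : ℝ) ^ 2) 1).mpr
    simpa using hz
  have h2 : (fun n : ℕ => 1 / ((↑(n + 1) : ℝ)) ^ 2) = fun n : ℕ => 1 / ((n:ℝ) + 1) ^ 2 := by
    funext n; push_cast; ring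
  rwa [h2] at h1

lemma integral_Ioi_aux : ∫ t in Ioi (0:ℝ), t * Real.exp (-t) / (1 - Real.exp (-t)) =
    Real.pi ^ 2 / 6 := by
  have hterm : ∀ n : ℕ, (∫ t in Ioi (0:ℝ), t * Real.exp (-(((n:ℝ) + 1) * t))) =
      1 / ((n:ℝ) + 1) ^ 2 := by
    intro n
    have hr : (0:ℝ) < (n:ℝ) + 1 := by positivity
    have h := Real.integral_rpow_mul_exp_neg_mul_Ioi (show (0:ℝ) < 2 by norm_num) hr
    rw [show (2:ℝ) - 1 = 1 by norm_num] at h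
    simp_rw [Real.rpow_one] at h
    rw [Real.Gamma_two, mul_one] at h
    rw [h, show (2:ℝ) = ((2:ℕ):ℝ) by norm_num, Real.rpow_natCast, div_pow, one_pow]
  have hint : ∀ n : ℕ, Integrable (fun t : ℝ => t * Real.exp (-(((n:ℝ) + 1) * t)))
      (volume.restrict (Ioi 0)) := by
    intro n
    have hr : (0:ℝ) < (n:ℝ) + 1 := by positivity
    have h := integrableOn_rpow_mul_exp_neg_mul_rpow (show (-1:ℝ) < 1 by norm_num) zero_lt_one hr
    apply h.congr_fun _ measurableSet_Ioi
    intro x hx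
    simp only [Real.rpow_one, neg_mul]
  have hnorm : Summable fun n : ℕ =>
      ∫ t in Ioi (0:ℝ), ‖t * Real.exp (-(((n:ℝ) + 1) * t))‖ := by
    have heq : ∀ n : ℕ, (∫ t in Ioi (0:ℝ), ‖t * Real.exp (-(((n:ℝ) + 1) * t))‖) =
        1 / ((n:ℝ) + 1) ^ 2 := by
      intro n
      rw [← hterm n]
      apply setIntegral_congr_fun measurableSet_Ioi
      intro t ht
      simp only [Real.norm_eq_abs]
      rw [abs_of_nonneg (mul_nonneg (le_of_lt ht) (Real.exp_pos _).le)]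
    simp_rw [heq]
    exact hasSum_inv_sq_succ.summable
  have hswap := MeasureTheory.integral_tsum_of_summable_integral_norm hint hnorm
  have hptsum : ∀ t ∈ Ioi (0:ℝ),
      t * Real.exp (-t) / (1 - Real.exp (-t)) =
        ∑' n : ℕ, t * Real.exp (-(((n:ℝ) + 1) * t)) := by
    intro t ht
    rw [Set.mem_Ioi] at ht
    have hr0 : (0:ℝ) < Real.exp (-t) := Real.exp_pos _
    have hr1 : Real.exp (-t) < 1 := by
      rw [Real.exp_lt_one_iff]; linarith
    have hgeom : (∑' n : ℕ, Real.exp (-t) ^ (n + 1)) = Real.exp (-t) / (1 - Real.exp (-t)) := by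
      simp_rw [pow_succ']
      rw [tsum_mul_left, tsum_geometric_of_lt_one hr0.le hr1, div_eq_mul_inv]
    have hexp : ∀ n : ℕ, Real.exp (-(((n:ℝ) + 1) * t)) = Real.exp (-t) ^ (n + 1) := by
      intro n
      rw [← Real.exp_nat_mul]
      congr 1
      push_cast
      ring
    calc t * Real.exp (-t) / (1 - Real.exp (-t))
        = t * (Real.exp (-t) / (1 - Real.exp (-t))) := by ring
      _ = t * ∑' n : ℕ, Real.exp (-t) ^ (n + 1) := by rw [hgeom]
      _ = ∑' n : ℕ, t * Real.exp (-t) ^ (n + 1) := by rw [tsum_mul_left]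
      _ = ∑' n : ℕ, t * Real.exp (-(((n:ℝ) + 1) * t)) := by
          congr 1; funext n; rw [hexp n]
  calc (∫ t in Ioi (0:ℝ), t * Real.exp (-t) / (1 - Real.exp (-t)))
      = ∫ t in Ioi (0:ℝ), ∑' n : ℕ, t * Real.exp (-(((n:ℝ) + 1) * t)) :=
        setIntegral_congr_fun measurableSet_Ioi hptsum
    _ = ∑' n : ℕ, ∫ t in Ioi (0:ℝ), t * Real.exp (-(((n:ℝ) + 1) * t)) := hswap.symm
    _ = ∑' n : ℕ, 1 / ((n:ℝ) + 1) ^ 2 := by simp_rw [hterm]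
    _ = Real.pi ^ 2 / 6 := hasSum_inv_sq_succ.tsum_eq

lemma integral_g0 : ∫ s : ℝ, g0 s = Real.pi ^ 2 / 6 := by
  set f : ℝ → ℝ := fun s => Real.log (1 + Real.exp s) with hfdef
  have hderiv : ∀ x ∈ (univ : Set ℝ),
      HasDerivWithinAt f (Real.exp x / (1 + Real.exp x)) univ x := by
    intro x _
    have h1 : (0:ℝ) < 1 + Real.exp x := by positivity
    have h3 : HasDerivAt (fun a : ℝ => 1 + Real.exp a) (Real.exp x) x :=
      (Real.hasDerivAt_exp x).const_add 1
    exact (h3.log (ne_of_gt h1)).hasDerivWithinAt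
  have hmono : StrictMono f := by
    intro x y hxy
    apply Real.log_lt_log (by positivity)
    have := Real.exp_lt_exp.mpr hxy
    linarith
  have hinj : InjOn f univ := hmono.injective.injOn
  have himg : f '' univ = Ioi 0 := by
    rw [Set.image_univ]
    ext t
    simp only [Set.mem_range, Set.mem_Ioi]
    constructor
    · rintro ⟨s, rfl⟩
      exact Real.log_pos (by linarith [Real.exp_pos s])
    · intro ht
      have h1 : (0:ℝ) < Real.exp t - 1 := by
        have := Real.exp_lt_exp.mpr ht
        simp only [Real.exp_zero] at this
        linarith
      refine ⟨Real.log (Real.exp t - 1), ?_⟩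
      show Real.log (1 + Real.exp (Real.log (Real.exp t - 1))) = t
      rw [Real.exp_log h1, show (1:ℝ) + (Real.exp t - 1) = Real.exp t by ring, Real.log_exp]
  have key := integral_image_eq_integral_abs_deriv_smul MeasurableSet.univ hderiv hinj
    (fun t => t * Real.exp (-t) / (1 - Real.exp (-t)))
  rw [himg] at key
  have hxform : ∀ x : ℝ, |Real.exp x / (1 + Real.exp x)| •
      (f x * Real.exp (-f x) / (1 - Real.exp (-f x))) = g0 x := by
    intro x
    have hE := Real.exp_pos x
    have h1 : (0:ℝ) < 1 + Real.exp x := by linarith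
    have h2 : Real.exp (-f x) = (1 + Real.exp x)⁻¹ := by
      rw [hfdef]
      simp only []
      rw [Real.exp_neg, Real.exp_log h1]
    rw [smul_eq_mul, abs_of_pos (by positivity), h2]
    unfold g0
    rw [hfdef]
    simp only []
    rw [show (1:ℝ) - (1 + Real.exp x)⁻¹ = Real.exp x / (1 + Real.exp x) by field_simp; ring]
    field_simp
  calc (∫ s : ℝ, g0 s)
      = ∫ x in (univ : Set ℝ), |Real.exp x / (1 + Real.exp x)| •
          (f x * Real.exp (-f x) / (1 - Real.exp (-f x))) := by
        rw [Measure.restrict_univ]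
        congr 1
        funext x
        exact (hxform x).symm
    _ = ∫ t in Ioi (0:ℝ), t * Real.exp (-t) / (1 - Real.exp (-t)) := key.symm
    _ = Real.pi ^ 2 / 6 := integral_Ioi_aux

lemma integral_G_close {c : ℝ} (hc : 0 < c) (hc1 : c ≤ 1) :
    |(∫ s : ℝ, G c s) - Real.pi ^ 2 / 6| ≤ 24 * Real.sqrt c := by
  have hInt := G_integrable hc.le hc1
  have h1 : (∫ s : ℝ, G c s) - Real.pi ^ 2 / 6 = -(∫ s : ℝ, (g0 s - G c s)) := by
    rw [integral_sub g0_integrable hInt, ← integral_g0]; ring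
  rw [h1, abs_neg]
  have h2 : 0 ≤ ∫ s : ℝ, (g0 s - G c s) := by
    apply integral_nonneg
    intro s
    simp only [Pi.zero_apply, sub_nonneg]
    exact G_le_g0 hc.le hc1 s
  rw [abs_of_nonneg h2]
  calc (∫ s : ℝ, (g0 s - G c s)) ≤ ∫ s : ℝ, 6 * Real.sqrt c * Real.exp (-|s| / 2) := by
        apply integral_mono (g0_integrable.sub hInt) (mexp_integrable.const_mul _)
        intro s
        exact g0_sub_G_le hc.le hc1 s
    _ = 6 * Real.sqrt c * 4 := by
        rw [MeasureTheory.integral_const_mul, mexp_integral]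
    _ = 24 * Real.sqrt c := by ring

lemma Q_eq {d : ℝ} (hd : 1 ≤ d) :
    (∫ p in {p : ℝ × ℝ | 1 < |p.1 - p.2|}, rho d p.1 * rho d p.2) =
      2 * ∫ x : ℝ, rho d x * F d (x - 1) := by
  set f : ℝ × ℝ → ℝ := fun p => rho d p.1 * rho d p.2 with hf
  have hm1 : MeasurableSet {p : ℝ × ℝ | 1 < p.1 - p.2} :=
    measurableSet_lt measurable_const (measurable_fst.sub measurable_snd)
  have hm2 : MeasurableSet {p : ℝ × ℝ | 1 < p.2 - p.1} :=
    measurableSet_lt measurable_const (measurable_snd.sub measurable_fst)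
  have hfint : Integrable f := by
    rw [hf, Measure.volume_eq_prod]
    exact (rho_integrable hd).mul_prod (rho_integrable hd)
  have hsplit : {p : ℝ × ℝ | 1 < |p.1 - p.2|} =
      {p : ℝ × ℝ | 1 < p.1 - p.2} ∪ {p : ℝ × ℝ | 1 < p.2 - p.1} := by
    ext p
    simp only [Set.mem_setOf_eq, Set.mem_union, lt_abs, neg_sub]
  have hdisj : Disjoint {p : ℝ × ℝ | 1 < p.1 - p.2} {p : ℝ × ℝ | 1 < p.2 - p.1} := by
    rw [Set.disjoint_left]
    intro p h1 h2
    simp only [Set.mem_setOf_eq] at h1 h2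
    linarith
  have hswap : (∫ p in {p : ℝ × ℝ | 1 < p.2 - p.1}, f p) =
      ∫ p in {p : ℝ × ℝ | 1 < p.1 - p.2}, f p := by
    rw [← integral_indicator hm2, ← integral_indicator hm1]
    have heq : ({p : ℝ × ℝ | 1 < p.2 - p.1}.indicator f) =
        fun p : ℝ × ℝ => ({p : ℝ × ℝ | 1 < p.1 - p.2}.indicator f) (Prod.swap p) := by
      funext p
      simp only [Set.indicator, Set.mem_setOf_eq, Prod.fst_swap, Prod.snd_swap, hf]
      by_cases h : 1 < p.2 - p.1 <;> simp [h, mul_comm]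
    rw [heq, Measure.volume_eq_prod]
    exact integral_prod_swap _
  have hS1 : (∫ p in {p : ℝ × ℝ | 1 < p.1 - p.2}, f p) = ∫ x : ℝ, rho d x * F d (x - 1) := by
    rw [← integral_indicator hm1, Measure.volume_eq_prod]
    rw [MeasureTheory.integral_prod _ ((by
      rw [← Measure.volume_eq_prod]
      exact hfint.indicator hm1) : Integrable ({p : ℝ × ℝ | 1 < p.1 - p.2}.indicator f)
        ((volume : Measure ℝ).prod volume))]
    congr 1
    funext x
    have hinner : (fun y => ({p : ℝ × ℝ | 1 < p.1 - p.2}.indicator f) (x, y)) =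
        (Iio (x - 1)).indicator (fun y => rho d x * rho d y) := by
      funext y
      simp only [Set.indicator, Set.mem_setOf_eq, Set.mem_Iio, hf]
      by_cases h : y < x - 1
      · rw [if_pos h, if_pos (by linarith)]
      · rw [if_neg h, if_neg (by intro hcon; exact h (by linarith))]
    rw [hinner, integral_indicator measurableSet_Iio, MeasureTheory.integral_const_mul,
      integral_Iio_rho hd]
  rw [hsplit, setIntegral_union hdisj hm2 hfint.integrableOn hfint.integrableOn, hswap, hS1]
  ring

lemma sub_eq {d : ℝ} (hd : 1 ≤ d) :
    (∫ x : ℝ, rho d x * F d (x - 1)) = (1 / d ^ 2) * ∫ s : ℝ, G (Real.exp (-d)) s := by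
  have hd0 : (0:ℝ) < d := lt_of_lt_of_le one_pos hd
  have hdne : d ≠ 0 := ne_of_gt hd0
  set φ : ℝ → ℝ := fun x => rho d x * F d (x - 1) with hφ
  have key : ∀ s : ℝ, φ (s / d + 1) = (1 / d) * G (Real.exp (-d)) s := by
    intro s
    simp only [hφ]
    unfold rho F G
    rw [show -d * (s / d + 1) = -d + -s by field_simp; ring]
    rw [show d * (s / d + 1 - 1) = s by field_simp; ring]
    rw [show d * (s / d + 1 - 1 - 1) = s + -d by field_simp; ring]
    rw [show Real.exp (-d + -s) = Real.exp (-d) * Real.exp (-s) from by rw [← Real.exp_add]]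
    rw [show Real.exp (s + -d) = Real.exp (-d) * Real.exp s from by rw [← Real.exp_add]; congr 1; ring]
    ring
  have h1 : (∫ s : ℝ, (fun x : ℝ => φ (x + 1)) (s / d)) = |d| • ∫ x : ℝ, φ (x + 1) :=
    MeasureTheory.Measure.integral_comp_div (fun x : ℝ => φ (x + 1)) d
  have h2 : (∫ x : ℝ, φ (x + 1)) = ∫ x : ℝ, φ x :=
    MeasureTheory.integral_add_right_eq_self φ 1
  have h3 : (∫ s : ℝ, (fun x : ℝ => φ (x + 1)) (s / d)) = ∫ s : ℝ, (1 / d) * G (Real.exp (-d)) s := by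
    congr 1
    funext s
    simp only []
    exact key s
  rw [h3, h2] at h1
  rw [MeasureTheory.integral_const_mul] at h1
  rw [abs_of_pos hd0, smul_eq_mul] at h1
  have h4 : (∫ x : ℝ, φ x) = (1 / d) * ((1 / d) * ∫ s : ℝ, G (Real.exp (-d)) s) := by
    field_simp at h1 ⊢
    linarith
  rw [h4]; ring

end Stmt8

/-- Pair-violation asymptotics of the logistic profile:
`Q(ρ_d) = π²/(3d²) + O(d⁻³)`, where
`Q(ρ) = ∬_{|x−y|>1} ρ(x)ρ(y) dx dy`. -/
theorem stmt_8 :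
    ∃ C : ℝ, 0 < C ∧ ∃ d₀ : ℝ, 0 < d₀ ∧
      ∀ d : ℝ, d₀ ≤ d →
        |(∫ p in {p : ℝ × ℝ | 1 < |p.1 - p.2|}, rho d p.1 * rho d p.2) -
            Real.pi ^ 2 / (3 * d ^ 2)| ≤ C / d ^ 3 := by
  refine ⟨48, by norm_num, 1, by norm_num, fun d hd => ?_⟩
  have hd0 : (0:ℝ) < d := lt_of_lt_of_le one_pos hd
  have h1 : (∫ p in {p : ℝ × ℝ | 1 < |p.1 - p.2|}, rho d p.1 * rho d p.2) =
      (2 / d ^ 2) * ∫ s : ℝ, Stmt8.G (Real.exp (-d)) s := by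
    rw [Stmt8.Q_eq hd, Stmt8.sub_eq hd]; ring
  have hc : (0:ℝ) < Real.exp (-d) := Real.exp_pos _
  have hc1 : Real.exp (-d) ≤ 1 := by rw [Real.exp_le_one_iff]; linarith
  have h2 := Stmt8.integral_G_close hc hc1
  have hsq : Real.sqrt (Real.exp (-d)) = Real.exp (-(d/2)) := by
    rw [← Real.exp_half]; ring_nf
  -- key numeric bound : d * exp (-(d/2)) ≤ 1
  have hnum : Real.exp (-(d / 2)) ≤ 1 / d := by
    rw [le_div_iff₀ hd0, Real.exp_neg, mul_comm, mul_inv_le_iff₀ (Real.exp_pos _), one_mul]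
    calc d ≤ (1 + d / 4) ^ 2 := by nlinarith [sq_nonneg (1 - d / 4)]
    _ ≤ Real.exp (d / 4) ^ 2 := by
        have := Real.add_one_le_exp (d / 4)
        nlinarith [Real.exp_pos (d/4)]
    _ = Real.exp (d / 2) := by
        rw [← Real.exp_nat_mul]; ring_nf
  have key : (∫ p in {p : ℝ × ℝ | 1 < |p.1 - p.2|}, rho d p.1 * rho d p.2) -
      Real.pi ^ 2 / (3 * d ^ 2) = (2 / d ^ 2) * ((∫ s : ℝ, Stmt8.G (Real.exp (-d)) s) - Real.pi ^ 2 / 6) := by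
    rw [h1]; field_simp; ring
  rw [key, abs_mul, abs_of_pos (show (0:ℝ) < 2 / d ^ 2 by positivity)]
  rw [hsq] at h2
  calc (2 / d ^ 2) * |(∫ s : ℝ, Stmt8.G (Real.exp (-d)) s) - Real.pi ^ 2 / 6|
      ≤ (2 / d ^ 2) * (24 * (1 / d)) := by
        refine mul_le_mul_of_nonneg_left (le_trans h2 ?_) (by positivity)
        exact mul_le_mul_of_nonneg_left hnum (by norm_num)
    _ = 48 / d ^ 3 := by field_simp; ring
end
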